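/- arXiv:quant-ph/0404047 — 3 statements merged into one kernel-verified Lean document; each statement's English description precedes it below -/
import Mathlib

section
/- Let ψ, φ ∈ R^n be probability vectors with ψ strictly majorized by φ, and let χ ∈ R^k be a positive probability vector with l_u(χ) > g_u(φ). Then there exists δ > 0 such that for every probability vector ω ∈ R^k with ||ω^↓ - χ^↓|| < δ (Euclidean distance between the non-increasingly sorted versions), ψ ⊗ χ is majorized by φ ⊗ ω. -/
open Finset

/-- `eSum v m` is the sum of the `m` largest entries of `v`
(the supremum of sums over subsets of cardinality `m`). -/
noncomputable def eSum {ι : Type} [Fintype ι] (v : ι → ℝ) (m : ℕ) : ℝ :=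
  sSup {x | ∃ s : Finset ι, s.card = m ∧ x = ∑ i ∈ s, v i}

/-- Majorization `x ≺ y`: partial sums of largest entries of `x` are dominated
by those of `y`, with equal total sums. -/
def Maj {ι κ : Type} [Fintype ι] [Fintype κ] (x : ι → ℝ) (y : κ → ℝ) : Prop :=
  (∀ m : ℕ, 1 ≤ m → m < Fintype.card ι → eSum x m ≤ eSum y m) ∧
    ∑ i, x i = ∑ j, y j

/-- Strict majorization `x ◁ y`: all inequalities strict, total sums equal. -/
def SMaj {ι κ : Type} [Fintype ι] [Fintype κ] (x : ι → ℝ) (y : κ → ℝ) : Prop :=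
  (∀ m : ℕ, 1 ≤ m → m < Fintype.card ι → eSum x m < eSum y m) ∧
    ∑ i, x i = ∑ j, y j

/-- Global uniformity: smallest entry divided by largest entry. -/
noncomputable def gu {ι : Type} [Fintype ι] (v : ι → ℝ) : ℝ :=
  sInf (Set.range v) / sSup (Set.range v)

/-- The set of ratios `v b / v a` over consecutive distinct values `v b < v a`
(no value strictly in between). -/
def ratioSet {ι : Type} [Fintype ι] (v : ι → ℝ) : Set ℝ :=
  {r | ∃ a b : ι, v b < v a ∧ (¬ ∃ c : ι, v b < v c ∧ v c < v a) ∧ r = v b / v a}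

open Classical in
noncomputable def lu {ι : Type} [Fintype ι] (v : ι → ℝ) : ℝ :=
  if (∃ a b : ι, v a ≠ v b) then sInf (ratioSet v) else 1

open Classical in
/-- Maximal local uniformity: maximum ratio of consecutive distinct values;
`1` for a constant vector. -/
noncomputable def Lu {ι : Type} [Fintype ι] (v : ι → ℝ) : ℝ :=
  if (∃ a b : ι, v a ≠ v b) then sSup (ratioSet v) else 1

/-- Tensor (Kronecker) product of two vectors. -/
def tens {ι κ : Type} (x : ι → ℝ) (y : κ → ℝ) : ι × κ → ℝ :=
  fun p => x p.1 * y p.2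

/-- `k`-fold tensor power of a vector. -/
def tpow {n : ℕ} (v : Fin n → ℝ) (k : ℕ) : (Fin k → Fin n) → ℝ :=
  fun f => ∏ i, v (f i)

/-- A probability vector: nonnegative entries summing to one. -/
def IsProb {ι : Type} [Fintype ι] (v : ι → ℝ) : Prop :=
  (∀ i, 0 ≤ v i) ∧ ∑ i, v i = 1

/-- `v` sorted in non-increasing order. -/
noncomputable def sortDesc {n : ℕ} (v : Fin n → ℝ) : Fin n → ℝ :=
  fun i => v (Tuple.sort v i.rev)

/-- Shannon entropy (base 2), with the convention `0 log 0 = 0`. -/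
noncomputable def entH {ι : Type} [Fintype ι] (v : ι → ℝ) : ℝ :=
  -∑ i, v i * Real.logb 2 (v i)


lemma eSum_set_finite {ι : Type} [Fintype ι] (v : ι → ℝ) (m : ℕ) :
    {x | ∃ s : Finset ι, s.card = m ∧ x = ∑ i ∈ s, v i}.Finite := by
  apply Set.Finite.subset (Set.finite_range (fun s : Finset ι => ∑ i ∈ s, v i))
  rintro x ⟨s, _, rfl⟩; exact ⟨s, rfl⟩

lemma sum_le_eSum {ι : Type} [Fintype ι] (v : ι → ℝ) {s : Finset ι} {m : ℕ}
    (h : s.card = m) : ∑ i ∈ s, v i ≤ eSum v m :=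
  le_csSup (eSum_set_finite v m).bddAbove ⟨s, h, rfl⟩

lemma exists_eSum_eq {ι : Type} [Fintype ι] (v : ι → ℝ) {m : ℕ}
    (hm : m ≤ Fintype.card ι) :
    ∃ s : Finset ι, s.card = m ∧ eSum v m = ∑ i ∈ s, v i := by
  have hne : {x | ∃ s : Finset ι, s.card = m ∧ x = ∑ i ∈ s, v i}.Nonempty := by
    obtain ⟨t, _, ht⟩ := Finset.exists_subset_card_eq (s := (univ : Finset ι)) (n := m)
      (by simpa using hm)
    exact ⟨∑ i ∈ t, v i, t, ht, rfl⟩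
  exact hne.csSup_mem (eSum_set_finite v m)

lemma eSum_zero {ι : Type} [Fintype ι] (v : ι → ℝ) : eSum v 0 = 0 := by
  obtain ⟨s, hs, he⟩ := exists_eSum_eq v (Nat.zero_le _)
  rw [he, Finset.card_eq_zero.mp hs, Finset.sum_empty]

lemma eSum_card {ι : Type} [Fintype ι] (v : ι → ℝ) :
    eSum v (Fintype.card ι) = ∑ i, v i := by
  obtain ⟨s, hs, he⟩ := exists_eSum_eq v le_rfl
  rw [he, Finset.eq_univ_of_card s hs]

lemma eSum_comp_equiv {ι κ : Type} [Fintype ι] [Fintype κ] (E : κ ≃ ι) (v : ι → ℝ) (m : ℕ) :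
    eSum (v ∘ E) m = eSum v m := by
  classical
  unfold eSum
  congr 1
  ext x
  constructor
  · rintro ⟨s, hc, rfl⟩
    refine ⟨s.image E, ?_, ?_⟩
    · rw [Finset.card_image_of_injective _ E.injective, hc]
    · rw [Finset.sum_image (fun a _ b _ hab => E.injective hab)]; rfl
  · rintro ⟨s, hc, rfl⟩
    refine ⟨s.image E.symm, ?_, ?_⟩
    · rw [Finset.card_image_of_injective _ E.symm.injective, hc]
    · rw [Finset.sum_image (fun a _ b _ hab => E.symm.injective hab)]
      exact Finset.sum_congr rfl (fun i _ => by simp)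

lemma eSum_le_eSum_add {ι : Type} [Fintype ι] (v w : ι → ℝ) {m : ℕ}
    (hm : m ≤ Fintype.card ι) :
    eSum v m ≤ eSum w m + ∑ i, |v i - w i| := by
  obtain ⟨s, hs, he⟩ := exists_eSum_eq v hm
  rw [he]
  have h1 : ∑ i ∈ s, v i = ∑ i ∈ s, w i + ∑ i ∈ s, (v i - w i) := by
    rw [← Finset.sum_add_distrib]; ring_nf
  rw [h1]
  gcongr
  · exact sum_le_eSum w hs
  · calc ∑ i ∈ s, (v i - w i) ≤ ∑ i ∈ s, |v i - w i| :=
          Finset.sum_le_sum (fun i _ => le_abs_self _)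
    _ ≤ ∑ i, |v i - w i| :=
          Finset.sum_le_sum_of_subset_of_nonneg (Finset.subset_univ s)
            (fun i _ _ => abs_nonneg _)

lemma tens_lower {n k : ℕ} (φ : Fin n → ℝ) (χ : Fin k → ℝ) (s_ : Fin k → Finset (Fin n)) :
    ∑ j, χ j * ∑ i ∈ s_ j, φ i ≤ eSum (tens φ χ) (∑ j, (s_ j).card) := by
  classical
  set S : Finset (Fin n × Fin k) :=
    (univ : Finset (Fin k)).biUnion (fun j => (s_ j).image (fun i => (i, j))) with hS
  have hdisj : ∀ j₁ ∈ (univ : Finset (Fin k)), ∀ j₂ ∈ (univ : Finset (Fin k)), j₁ ≠ j₂ →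
      Disjoint ((s_ j₁).image (fun i => (i, j₁))) ((s_ j₂).image (fun i => (i, j₂))) := by
    intro j₁ _ j₂ _ hne
    rw [Finset.disjoint_left]
    rintro p hp₁ hp₂
    simp only [Finset.mem_image] at hp₁ hp₂
    obtain ⟨a, _, rfl⟩ := hp₁
    obtain ⟨b, _, hb⟩ := hp₂
    exact hne (by simpa using (Prod.ext_iff.mp hb).2.symm)
  have hcard : S.card = ∑ j, (s_ j).card := by
    rw [hS, Finset.card_biUnion hdisj]
    exact Finset.sum_congr rfl (fun j _ =>
      Finset.card_image_of_injective _ (fun a b hab => (Prod.ext_iff.mp hab).1))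
  have hsum : ∑ p ∈ S, tens φ χ p = ∑ j, χ j * ∑ i ∈ s_ j, φ i := by
    rw [hS, Finset.sum_biUnion hdisj]
    refine Finset.sum_congr rfl (fun j _ => ?_)
    rw [Finset.sum_image (fun a _ b _ hab => (Prod.ext_iff.mp hab).1)]
    simp only [tens, Finset.mul_sum]
    exact Finset.sum_congr rfl (fun i _ => by ring)
  rw [← hsum]
  exact sum_le_eSum _ hcard

lemma tens_lower' {n k : ℕ} (φ : Fin n → ℝ) (χ : Fin k → ℝ) (m_ : Fin k → ℕ)
    (hm_ : ∀ j, m_ j ≤ n) :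
    ∑ j, χ j * eSum φ (m_ j) ≤ eSum (tens φ χ) (∑ j, m_ j) := by
  have hch : ∀ j : Fin k, ∃ s : Finset (Fin n), s.card = m_ j ∧ eSum φ (m_ j) = ∑ i ∈ s, φ i :=
    fun j => exists_eSum_eq φ (by simpa using hm_ j)
  choose s_ hc he using hch
  calc ∑ j, χ j * eSum φ (m_ j) = ∑ j, χ j * ∑ i ∈ s_ j, φ i := by
        exact Finset.sum_congr rfl (fun j _ => by rw [he j])
    _ ≤ eSum (tens φ χ) (∑ j, (s_ j).card) := tens_lower φ χ s_
    _ = eSum (tens φ χ) (∑ j, m_ j) := by rw [Finset.sum_congr rfl (fun j _ => hc j)]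

lemma tens_upper {n k : ℕ} (ψ : Fin n → ℝ) (χ : Fin k → ℝ) (hχ : ∀ j, 0 ≤ χ j)
    {m : ℕ} (hm : m ≤ n * k) :
    ∃ m_ : Fin k → ℕ, (∀ j, m_ j ≤ n) ∧ (∑ j, m_ j = m) ∧
      eSum (tens ψ χ) m ≤ ∑ j, χ j * eSum ψ (m_ j) := by
  classical
  have hcard : Fintype.card (Fin n × Fin k) = n * k := by simp
  obtain ⟨S, hSc, hSe⟩ := exists_eSum_eq (tens ψ χ) (m := m) (by rw [hcard]; exact hm)
  set m_ : Fin k → ℕ := fun j => (S.filter (fun p => p.2 = j)).card with hm_def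
  have hfst_inj : ∀ j : Fin k, Set.InjOn (Prod.fst : Fin n × Fin k → Fin n) ↑(S.filter (fun p => p.2 = j)) := by
    intro j p hp q hq hpq
    simp only [Finset.coe_filter, Set.mem_setOf_eq] at hp hq
    exact Prod.ext hpq (hp.2.trans hq.2.symm)
  refine ⟨m_, ?_, ?_, ?_⟩
  · intro j
    calc m_ j = ((S.filter (fun p => p.2 = j)).image Prod.fst).card :=
          (Finset.card_image_of_injOn (hfst_inj j)).symm
      _ ≤ Fintype.card (Fin n) := Finset.card_le_univ _
      _ = n := by simp
  · rw [hm_def, ← hSc]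
    exact (Finset.card_eq_sum_card_fiberwise (fun p _ => Finset.mem_univ p.2)).symm
  · rw [hSe]
    rw [← Finset.sum_fiberwise_of_maps_to (fun p _ => Finset.mem_univ p.2) (tens ψ χ)]
    refine Finset.sum_le_sum (fun j _ => ?_)
    have : ∑ p ∈ S.filter (fun p => p.2 = j), tens ψ χ p
        = χ j * ∑ i ∈ (S.filter (fun p => p.2 = j)).image Prod.fst, ψ i := by
      rw [Finset.sum_image (fun a ha b hb hab => hfst_inj j (Finset.mem_coe.mpr ha) (Finset.mem_coe.mpr hb) hab)]
      rw [Finset.mul_sum]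
      refine Finset.sum_congr rfl (fun p hp => ?_)
      have : p.2 = j := (Finset.mem_filter.mp hp).2
      simp [tens, this]; ring
    rw [this]
    have hcimg : ((S.filter (fun p => p.2 = j)).image Prod.fst).card = m_ j :=
      Finset.card_image_of_injOn (hfst_inj j)
    exact mul_le_mul_of_nonneg_left (sum_le_eSum ψ hcimg) (hχ j)

lemma ratioSet_bddBelow {ι : Type} [Fintype ι] {v : ι → ℝ} (hpos : ∀ i, 0 < v i) :
    BddBelow (ratioSet v) := by
  refine ⟨0, ?_⟩
  rintro r ⟨a, b, _, _, rfl⟩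
  exact div_nonneg (hpos b).le (hpos a).le

lemma lu_le_ratio {ι : Type} [Fintype ι] {v : ι → ℝ} (hpos : ∀ i, 0 < v i)
    {a b : ι} (hba : v b < v a) (hnoc : ¬ ∃ c : ι, v b < v c ∧ v c < v a) :
    lu v ≤ v b / v a := by
  have hex : ∃ x y : ι, v x ≠ v y := ⟨a, b, hba.ne'⟩
  rw [lu, if_pos hex]
  exact csInf_le (ratioSet_bddBelow hpos) ⟨a, b, hba, hnoc, rfl⟩

lemma lu_le_one {ι : Type} [Fintype ι] (v : ι → ℝ) (hpos : ∀ i, 0 < v i) :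
    lu v ≤ 1 := by
  classical
  by_cases hex : ∃ a b : ι, v a ≠ v b
  · obtain ⟨a₀, b₀, hab⟩ := hex
    have hne : (univ : Finset ι).Nonempty := ⟨a₀, Finset.mem_univ a₀⟩
    obtain ⟨a, _, ha⟩ := Finset.exists_max_image univ v hne
    have hb : ∃ b : ι, v b < v a := by
      rcases lt_or_eq_of_le (ha a₀ (Finset.mem_univ a₀)) with h' | h'
      · exact ⟨a₀, h'⟩
      · refine ⟨b₀, lt_of_le_of_ne (ha b₀ (Finset.mem_univ b₀)) ?_⟩
        rw [h'] at hab; exact hab.symm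
    obtain ⟨b₁, hb₁⟩ := hb
    have hTne : (univ.filter (fun i => v i < v a)).Nonempty :=
      ⟨b₁, Finset.mem_filter.mpr ⟨Finset.mem_univ b₁, hb₁⟩⟩
    obtain ⟨b, hbT, hbmax⟩ := Finset.exists_max_image _ v hTne
    have hbva : v b < v a := (Finset.mem_filter.mp hbT).2
    have hnoc : ¬ ∃ c : ι, v b < v c ∧ v c < v a := by
      rintro ⟨c, hc1, hc2⟩
      exact absurd (hbmax c (Finset.mem_filter.mpr ⟨Finset.mem_univ c, hc2⟩))
        (not_le.mpr hc1)
    calc lu v ≤ v b / v a := lu_le_ratio hpos hbva hnoc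
      _ ≤ 1 := by
        rw [div_le_one (hpos a)]; exact hbva.le
  · rw [lu, if_neg hex]

lemma strict_tensor {n k : ℕ} (ψ φ : Fin n → ℝ)
    (hψsum : ∑ i, ψ i = 1) (hφ0 : ∀ i, 0 ≤ φ i) (hφsum : ∑ i, φ i = 1)
    (hsm : ∀ m : ℕ, 1 ≤ m → m < n → eSum ψ m < eSum φ m)
    (χ : Fin k → ℝ) (hχpos : ∀ i, 0 < χ i)
    (h : gu φ < lu χ) :
    ∀ m : ℕ, 1 ≤ m → m < n * k → eSum (tens ψ χ) m < eSum (tens φ χ) m := by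
  classical
  intro m hm1 hmk
  -- basic positivity of dimensions
  have hn : 0 < n := by
    rcases Nat.eq_zero_or_pos n with h' | h'
    · subst h'; simp at hmk
    · exact h'
  have hk : 0 < k := by
    rcases Nat.eq_zero_or_pos k with h' | h'
    · subst h'; simp at hmk
    · exact h'
  -- min and max of φ
  have hrne : (Set.range φ).Nonempty := ⟨φ ⟨0, hn⟩, ⟨0, hn⟩, rfl⟩
  set M := sSup (Set.range φ) with hMdef
  set μ := sInf (Set.range φ) with hμdef
  obtain ⟨imax, himax⟩ : M ∈ Set.range φ := hrne.csSup_mem (Set.finite_range φ)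
  obtain ⟨imin, himin⟩ : μ ∈ Set.range φ := hrne.csInf_mem (Set.finite_range φ)
  have hleM : ∀ i, φ i ≤ M := fun i => le_csSup (Set.finite_range φ).bddAbove ⟨i, rfl⟩
  have hμle : ∀ i, μ ≤ φ i := fun i => csInf_le (Set.finite_range φ).bddBelow ⟨i, rfl⟩
  have hMpos : 0 < M := by
    by_contra hM
    push_neg at hM
    have : ∀ i, φ i = 0 := fun i => le_antisymm (le_trans (hleM i) hM) (hφ0 i)
    rw [Finset.sum_congr rfl (fun i _ => this i)] at hφsum
    simp at hφsum
  have hμ0 : 0 ≤ μ := himin ▸ hφ0 imin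
  -- eSum at endpoints
  have heψn : eSum ψ n = 1 := by
    have := eSum_card ψ; rw [Fintype.card_fin] at this; rw [this, hψsum]
  have heφn : eSum φ n = 1 := by
    have := eSum_card φ; rw [Fintype.card_fin] at this; rw [this, hφsum]
  have hle : ∀ m' : ℕ, m' ≤ n → eSum ψ m' ≤ eSum φ m' := by
    intro m' hm'
    rcases Nat.eq_zero_or_pos m' with h0 | h0
    · subst h0; rw [eSum_zero, eSum_zero]
    rcases eq_or_lt_of_le hm' with he | hlt
    · subst he; rw [heψn, heφn]
    · exact (hsm m' h0 hlt).le
  -- decompose the optimal set for ψ ⊗ χ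
  obtain ⟨m_, hmn, hmsum, hub⟩ := tens_upper ψ χ (fun j => (hχpos j).le) hmk.le
  by_cases hcase : ∃ j, m_ j ≠ 0 ∧ m_ j ≠ n
  · -- some column is partially filled: strictness from hsm
    obtain ⟨j₀, hj₀0, hj₀n⟩ := hcase
    have hstrict : ∑ j, χ j * eSum ψ (m_ j) < ∑ j, χ j * eSum φ (m_ j) := by
      refine Finset.sum_lt_sum
        (fun j _ => mul_le_mul_of_nonneg_left (hle (m_ j) (hmn j)) (hχpos j).le) ?_
      refine ⟨j₀, Finset.mem_univ j₀, ?_⟩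
      exact mul_lt_mul_of_pos_left
        (hsm (m_ j₀) (Nat.one_le_iff_ne_zero.mpr hj₀0)
          (lt_of_le_of_ne (hmn j₀) hj₀n)) (hχpos j₀)
    calc eSum (tens ψ χ) m ≤ ∑ j, χ j * eSum ψ (m_ j) := hub
      _ < ∑ j, χ j * eSum φ (m_ j) := hstrict
      _ ≤ eSum (tens φ χ) (∑ j, m_ j) := tens_lower' φ χ m_ hmn
      _ = eSum (tens φ χ) m := by rw [hmsum]
  · -- every column is full or empty
    push_neg at hcase
    have hcase' : ∀ j, m_ j = 0 ∨ m_ j = n := by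
      intro j
      by_cases h0 : m_ j = 0
      · exact Or.inl h0
      · exact Or.inr (hcase j h0)
    set F : Finset (Fin k) := univ.filter (fun j => m_ j = n) with hFdef
    set t := F.card with htdef
    have hmnt : m = t * n := by
      rw [← hmsum]
      rw [← Finset.sum_filter_add_sum_filter_not univ (fun j => m_ j = n) m_]
      have h1 : ∑ j ∈ univ.filter (fun j => m_ j = n), m_ j = t * n := by
        rw [Finset.sum_congr rfl (fun j hj => (Finset.mem_filter.mp hj).2)]
        rw [Finset.sum_const, smul_eq_mul]
      have h2 : ∑ j ∈ univ.filter (fun j => ¬ m_ j = n), m_ j = 0 := by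
        refine Finset.sum_eq_zero (fun j hj => ?_)
        rcases hcase' j with h' | h'
        · exact h'
        · exact absurd h' (Finset.mem_filter.mp hj).2
      rw [h1, h2, add_zero]
    have ht1 : 1 ≤ t := by
      by_contra ht
      push_neg at ht
      interval_cases t
      omega
    have ht2 : t < k := by
      by_contra ht
      push_neg at ht
      have htk : t ≤ k := htdef ▸ le_trans (Finset.card_le_univ F) (by simp)
      have : t = k := le_antisymm htk ht
      rw [this, mul_comm] at hmnt
      omega
    -- upper bound: eSum (ψ⊗χ) m ≤ ∑_{j ∈ F} χ j
    have hub2 : eSum (tens ψ χ) m ≤ ∑ j ∈ F, χ j := by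
      refine le_trans hub (le_of_eq ?_)
      rw [← Finset.sum_subset (Finset.subset_univ F)
        (fun c _ hc => ?_)]
      · refine Finset.sum_congr rfl (fun j hj => ?_)
        rw [(Finset.mem_filter.mp hj).2, heψn, mul_one]
      · have : m_ c = 0 := by
          rcases hcase' c with h' | h'
          · exact h'
          · exact absurd (Finset.mem_filter.mpr ⟨Finset.mem_univ c, h'⟩) hc
        rw [this, eSum_zero, mul_zero]
    -- choose an optimal family F' of t columns
    have hpne : ((univ : Finset (Fin k)).powersetCard t).Nonempty := by
      rw [Finset.powersetCard_nonempty]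
      simpa using ht2.le
    obtain ⟨F', hF'mem, hF'max⟩ := Finset.exists_max_image _ (fun s => ∑ j ∈ s, χ j) hpne
    have hF'card : F'.card = t := (Finset.mem_powersetCard_univ.mp hF'mem)
    have hFF' : ∑ j ∈ F, χ j ≤ ∑ j ∈ F', χ j :=
      hF'max F (Finset.mem_powersetCard_univ.mpr rfl)
    have hF'ne : F'.Nonempty := Finset.card_pos.mp (by omega)
    have hcne : (univ \ F').Nonempty := by
      rw [← Finset.card_pos, Finset.card_sdiff_of_subset (Finset.subset_univ F'),
        Finset.card_univ, Fintype.card_fin, hF'card]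
      omega
    obtain ⟨j, hjF', hjmin⟩ := Finset.exists_min_image F' χ hF'ne
    obtain ⟨j', hj'c, hj'max⟩ := Finset.exists_max_image _ χ hcne
    have hj'F' : j' ∉ F' := (Finset.mem_sdiff.mp hj'c).2
    have hjj' : j ≠ j' := fun hh => hj'F' (hh ▸ hjF')
    -- maximality forces χ j' ≤ χ j
    have hj'j : χ j' ≤ χ j := by
      by_contra hlt
      push_neg at hlt
      set G := insert j' (F'.erase j) with hGdef
      have hj'e : j' ∉ F'.erase j := fun hh => hj'F' (Finset.mem_of_mem_erase hh)
      have hGcard : G.card = t := by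
        rw [hGdef, Finset.card_insert_of_notMem hj'e,
          Finset.card_erase_of_mem hjF', hF'card]
        omega
      have hGsum : ∑ c ∈ G, χ c = ∑ c ∈ F', χ c - χ j + χ j' := by
        rw [hGdef, Finset.sum_insert hj'e, Finset.sum_erase_eq_sub hjF']
        ring
      have := hF'max G (Finset.mem_powersetCard_univ.mpr hGcard)
      rw [hGsum] at this
      linarith
    -- the key ratio inequality
    have hlu1 : lu χ ≤ 1 := lu_le_one χ hχpos
    have hguM : μ / M < χ j' / χ j := by
      rcases eq_or_lt_of_le hj'j with he | hlt
      · rw [he, div_self (hχpos j).ne']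
        exact lt_of_lt_of_le h hlu1
      · refine lt_of_lt_of_le h (lu_le_ratio hχpos hlt ?_)
        rintro ⟨c, hc1, hc2⟩
        by_cases hcF' : c ∈ F'
        · exact absurd (hjmin c hcF') (not_le.mpr hc2)
        · exact absurd (hj'max c (Finset.mem_sdiff.mpr ⟨Finset.mem_univ c, hcF'⟩))
            (not_le.mpr hc1)
    have hcross : μ * χ j < M * χ j' := by
      rw [div_lt_div_iff₀ hMpos (hχpos j)] at hguM
      linarith
    -- construct the better configuration
    set m' : Fin k → ℕ := fun c =>
      if c ∈ F'.erase j then n else if c = j then n - 1 else if c = j' then 1 else 0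
      with hm'def
    have hm'n : ∀ c, m' c ≤ n := by
      intro c
      simp only [hm'def]
      split_ifs <;> omega
    have hjnotmem : j ∉ F'.erase j := Finset.notMem_erase j F'
    have hj'e : j' ∉ F'.erase j := fun hh => hj'F' (Finset.mem_of_mem_erase hh)
    have hm'j : m' j = n - 1 := by simp only [hm'def]; simp [hjnotmem]
    have hm'j' : m' j' = 1 := by
      simp only [hm'def]
      simp [hj'e, hjj'.symm]
    have hm'F : ∀ c ∈ F'.erase j, m' c = n := by
      intro c hc; simp only [hm'def]; rw [if_pos hc]
    have hm'0 : ∀ c, c ∉ insert j' F' → m' c = 0 := by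
      intro c hc
      rw [Finset.mem_insert] at hc
      push_neg at hc
      have hc1 : c ∉ F'.erase j := fun hh => hc.2 (Finset.mem_of_mem_erase hh)
      have hc2 : c ≠ j := fun hh => hc.2 (hh ▸ hjF')
      simp only [hm'def]
      simp [hc1, hc2, hc.1]
    have hj'F'i : j' ∉ F' := hj'F'
    -- sum of m' is m
    have hsum' : ∑ c, m' c = m := by
      rw [← Finset.sum_subset (Finset.subset_univ (insert j' F'))
        (fun c _ hc => hm'0 c hc)]
      rw [Finset.sum_insert hj'F'i, ← Finset.add_sum_erase _ _ hjF']
      rw [hm'j', hm'j, Finset.sum_congr rfl hm'F, Finset.sum_const, smul_eq_mul,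
        Finset.card_erase_of_mem hjF', hF'card, hmnt]
      have h2 : (t - 1) * n = t * n - n := by
        rw [Nat.sub_mul, one_mul]
      have h3 : n ≤ t * n := Nat.le_mul_of_pos_left n ht1
      omega
    -- lower bounds for partial eSums of φ
    have he1 : M ≤ eSum φ 1 := by
      have : ∑ i ∈ {imax}, φ i = M := by rw [Finset.sum_singleton, himax]
      rw [← this]
      exact sum_le_eSum φ (Finset.card_singleton imax)
    have hen1 : 1 - μ ≤ eSum φ (n - 1) := by
      have hcard : (univ.erase imin).card = n - 1 := by
        rw [Finset.card_erase_of_mem (Finset.mem_univ imin), Finset.card_univ,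
          Fintype.card_fin]
      have : ∑ i ∈ univ.erase imin, φ i = 1 - μ := by
        rw [Finset.sum_erase_eq_sub (Finset.mem_univ imin), hφsum, himin]
      rw [← this]
      exact sum_le_eSum φ hcard
    -- final chain
    have hlb : ∑ c ∈ F', χ c + (M * χ j' - μ * χ j) ≤ eSum (tens φ χ) m := by
      have step1 : ∑ c, χ c * eSum φ (m' c) ≤ eSum (tens φ χ) m := by
        have := tens_lower' φ χ m' hm'n
        rwa [hsum'] at this
      refine le_trans ?_ step1
      rw [← Finset.sum_subset (Finset.subset_univ (insert j' F'))
        (fun c _ hc => by rw [hm'0 c hc, eSum_zero, mul_zero])]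
      rw [Finset.sum_insert hj'F'i,
        ← Finset.add_sum_erase F' (fun c => χ c * eSum φ (m' c)) hjF']
      have hterm3 : ∑ c ∈ F'.erase j, χ c * eSum φ (m' c) = ∑ c ∈ F'.erase j, χ c := by
        refine Finset.sum_congr rfl (fun c hc => ?_)
        rw [hm'F c hc, heφn, mul_one]
      rw [hterm3, hm'j', hm'j]
      have hsF' : ∑ c ∈ F'.erase j, χ c = ∑ c ∈ F', χ c - χ j :=
        Finset.sum_erase_eq_sub hjF'
      rw [hsF']
      have b1 : χ j' * M ≤ χ j' * eSum φ 1 :=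
        mul_le_mul_of_nonneg_left he1 (hχpos j').le
      have b2 : χ j * (1 - μ) ≤ χ j * eSum φ (n - 1) :=
        mul_le_mul_of_nonneg_left hen1 (hχpos j).le
      nlinarith [hχpos j, hχpos j']
    calc eSum (tens ψ χ) m ≤ ∑ c ∈ F, χ c := hub2
      _ ≤ ∑ c ∈ F', χ c := hFF'
      _ < ∑ c ∈ F', χ c + (M * χ j' - μ * χ j) := by linarith
      _ ≤ eSum (tens φ χ) m := hlb

lemma sortDesc_eq_comp {k : ℕ} (v : Fin k → ℝ) :
    sortDesc v = v ∘ (Fin.revPerm.trans (Tuple.sort v)) := by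
  funext i
  simp [sortDesc]

lemma eSum_tens_sortDesc {n k : ℕ} (φ : Fin n → ℝ) (v : Fin k → ℝ) (m : ℕ) :
    eSum (tens φ (sortDesc v)) m = eSum (tens φ v) m := by
  have h1 : tens φ (sortDesc v)
      = (tens φ v) ∘ (Equiv.prodCongr (Equiv.refl (Fin n))
          (Fin.revPerm.trans (Tuple.sort v))) := by
    funext p
    simp [tens, sortDesc_eq_comp]
  rw [h1, eSum_comp_equiv]

lemma tens_total {n k : ℕ} (x : Fin n → ℝ) (y : Fin k → ℝ) :
    ∑ p : Fin n × Fin k, tens x y p = (∑ i, x i) * (∑ j, y j) := by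
  calc ∑ p : Fin n × Fin k, tens x y p = ∑ i, ∑ j, x i * y j :=
        Fintype.sum_prod_type _
    _ = ∑ i, x i * ∑ j, y j := by simp [Finset.mul_sum]
    _ = (∑ i, x i) * ∑ j, y j := by rw [Finset.sum_mul]

/-- robustness of the tensor majorization under small
perturbations of the auxiliary state. -/
theorem exists_delta_majorization_perturbation {n k : ℕ}
    (ψ φ : Fin n → ℝ) (hψ : IsProb ψ) (hφ : IsProb φ) (hsm : SMaj ψ φ)
    (χ : Fin k → ℝ) (hχprob : IsProb χ) (hχpos : ∀ i, 0 < χ i)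
    (h : gu φ < lu χ) :
    ∃ δ > 0, ∀ ω : Fin k → ℝ, IsProb ω →
      Real.sqrt (∑ i, (sortDesc ω i - sortDesc χ i) ^ 2) < δ →
      Maj (tens ψ χ) (tens φ ω) := by
  obtain ⟨hψ0, hψsum⟩ := hψ
  obtain ⟨hφ0, hφsum⟩ := hφ
  obtain ⟨hχ0, hχsum⟩ := hχprob
  obtain ⟨hsm', hsum_eq⟩ := hsm
  have hsm'' : ∀ m : ℕ, 1 ≤ m → m < n → eSum ψ m < eSum φ m := by
    intro m h1 h2
    exact hsm' m h1 (by simpa using h2)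
  have hstrict := strict_tensor ψ φ hψsum hφ0 hφsum hsm'' χ hχpos h
  have htot : ∀ ω : Fin k → ℝ, (∑ j, ω j = 1) →
      ∑ p : Fin n × Fin k, tens ψ χ p = ∑ p : Fin n × Fin k, tens φ ω p := by
    intro ω hω
    rw [tens_total, tens_total, hψsum, hφsum, hχsum, hω]
  by_cases hnk : n * k < 2
  · refine ⟨1, one_pos, fun ω hω _ => ⟨?_, htot ω hω.2⟩⟩
    intro m hm1 hm2
    rw [Fintype.card_prod, Fintype.card_fin, Fintype.card_fin] at hm2
    omega
  · push_neg at hnk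
    have hk : 0 < k := by
      rcases Nat.eq_zero_or_pos k with h' | h'
      · exfalso; subst h'; simpa using hχsum
      · exact h'
    set g : ℕ → ℝ := fun m => eSum (tens φ χ) m - eSum (tens ψ χ) m with hg
    have hIne : (Finset.Icc 1 (n * k - 1)).Nonempty := by
      rw [Finset.nonempty_Icc]; omega
    set T := (Finset.Icc 1 (n * k - 1)).image g with hT
    have hTne : T.Nonempty := hIne.image g
    set ε := T.min' hTne with hε
    have hεpos : 0 < ε := by
      obtain ⟨m, hmI, hmg⟩ := Finset.mem_image.mp (T.min'_mem hTne)
      rw [hε, ← hmg]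
      simp only [hg]
      rw [Finset.mem_Icc] at hmI
      have := hstrict m hmI.1 (by omega)
      linarith
    have hεle : ∀ m : ℕ, 1 ≤ m → m < n * k → ε ≤ g m := by
      intro m h1 h2
      exact T.min'_le (g m)
        (Finset.mem_image_of_mem g (Finset.mem_Icc.mpr ⟨h1, by omega⟩))
    refine ⟨ε / (k + 1), by positivity, fun ω hω hclose => ?_⟩
    refine ⟨?_, htot ω hω.2⟩
    intro m hm1 hm2
    rw [Fintype.card_prod, Fintype.card_fin, Fintype.card_fin] at hm2
    set D := Real.sqrt (∑ i, (sortDesc ω i - sortDesc χ i) ^ 2) with hD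
    have hD0 : 0 ≤ D := Real.sqrt_nonneg _
    have hDle : ∀ j, |sortDesc ω j - sortDesc χ j| ≤ D := by
      intro j
      rw [hD, ← Real.sqrt_sq_eq_abs]
      exact Real.sqrt_le_sqrt
        (Finset.single_le_sum (f := fun i => (sortDesc ω i - sortDesc χ i) ^ 2)
          (fun i _ => sq_nonneg _) (Finset.mem_univ j))
    have habs : ∑ p : Fin n × Fin k,
        |tens φ (sortDesc χ) p - tens φ (sortDesc ω) p| ≤ k * D := by
      calc ∑ p : Fin n × Fin k, |tens φ (sortDesc χ) p - tens φ (sortDesc ω) p|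
          = ∑ i, ∑ j, |φ i * sortDesc χ j - φ i * sortDesc ω j| :=
            Fintype.sum_prod_type _
        _ = ∑ i, ∑ j, φ i * |sortDesc χ j - sortDesc ω j| := by
            refine Finset.sum_congr rfl (fun i _ => Finset.sum_congr rfl (fun j _ => ?_))
            rw [← mul_sub, abs_mul, abs_of_nonneg (hφ0 i)]
        _ = ∑ j, |sortDesc χ j - sortDesc ω j| := by
            rw [← Finset.sum_mul_sum]
            rw [hφsum, one_mul]
        _ ≤ ∑ _j : Fin k, D := Finset.sum_le_sum (fun j _ => by
            rw [abs_sub_comm]; exact hDle j)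
        _ = k * D := by simp [mul_comm]
    have key : eSum (tens φ χ) m ≤ eSum (tens φ ω) m + k * D := by
      rw [← eSum_tens_sortDesc φ χ m, ← eSum_tens_sortDesc φ ω m]
      have hmc : m ≤ Fintype.card (Fin n × Fin k) := by
        rw [Fintype.card_prod, Fintype.card_fin, Fintype.card_fin]; omega
      have := eSum_le_eSum_add (tens φ (sortDesc χ)) (tens φ (sortDesc ω)) hmc
      linarith [habs]
    have hεm : ε ≤ eSum (tens φ χ) m - eSum (tens ψ χ) m := hεle m hm1 hm2
    have hkD : (k : ℝ) * D < ε := by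
      have h1 : (k : ℝ) * D < k * (ε / (k + 1)) := by
        apply mul_lt_mul_of_pos_left _ (by positivity)
        exact hclose
      have h2 : (k : ℝ) * (ε / (k + 1)) ≤ ε := by
        rw [mul_div_assoc']
        rw [div_le_iff₀ (by positivity)]
        nlinarith [hεpos]
      linarith
    linarith
end

section
/- Let x, y ∈ R^{m+n} be such that, when sorted non-increasingly, x^↓ = (x'^↓, x''^↓) and y^↓ = (y'^↓, y''^↓) for vectors x', y' ∈ R^m and x'', y'' ∈ R^n (i.e., the sorted versions split as concatenations of the sorted blocks). If x ≺ y and x' ≺ y', then x'' ≺ y''. -/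
open Finset

lemma eSumSetEq {ι : Type} [Fintype ι] (v : ι → ℝ) (m : ℕ) :
    {x | ∃ s : Finset ι, s.card = m ∧ x = ∑ i ∈ s, v i} =
      ↑((Finset.univ.powersetCard m).image (fun s : Finset ι => ∑ i ∈ s, v i)) := by
  ext x
  simp only [Set.mem_setOf_eq, coe_image, Set.mem_image, mem_coe, mem_powersetCard]
  constructor
  · rintro ⟨s, hc, rfl⟩; exact ⟨s, ⟨subset_univ _, hc⟩, rfl⟩
  · rintro ⟨s, ⟨-, hc⟩, rfl⟩; exact ⟨s, hc, rfl⟩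

lemma leESum {ι : Type} [Fintype ι] (v : ι → ℝ) (s : Finset ι) :
    ∑ i ∈ s, v i ≤ eSum v s.card := by
  classical
  have hb : BddAbove {x | ∃ t : Finset ι, t.card = s.card ∧ x = ∑ i ∈ t, v i} := by
    rw [eSumSetEq]
    exact (Finset.finite_toSet _).bddAbove
  exact le_csSup hb ⟨s, rfl, rfl⟩

lemma existsESum {ι : Type} [Fintype ι] (v : ι → ℝ) (m : ℕ) (h : m ≤ Fintype.card ι) :
    ∃ s : Finset ι, s.card = m ∧ eSum v m = ∑ i ∈ s, v i := by
  classical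
  obtain ⟨s0, -, hs0⟩ := Finset.exists_subset_card_eq (s := (Finset.univ : Finset ι)) (n := m)
    (by simpa using h)
  set S := (Finset.univ.powersetCard m).image (fun s : Finset ι => ∑ i ∈ s, v i) with hS
  have hne : S.Nonempty :=
    ⟨_, Finset.mem_image.2 ⟨s0, Finset.mem_powersetCard.2 ⟨subset_univ _, hs0⟩, rfl⟩⟩
  have hmax : eSum v m = S.max' hne := by
    rw [eSum, eSumSetEq]; exact hne.csSup_eq_max'
  obtain ⟨s, hs, hval⟩ := Finset.mem_image.1 (S.max'_mem hne)
  exact ⟨s, (Finset.mem_powersetCard.1 hs).2, by rw [hmax, ← hval]⟩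

lemma eSumSplit {m n : ℕ} (u : Fin m → ℝ) (w : Fin n → ℝ)
    (h : ∀ i j, w j ≤ u i) (k : ℕ) (hk : k ≤ n) :
    eSum (Sum.elim u w) (m + k) = ∑ i, u i + eSum w k := by
  classical
  apply le_antisymm
  · obtain ⟨s, hcard, hval⟩ := existsESum (Sum.elim u w) (m + k)
      (by simp only [Fintype.card_sum, Fintype.card_fin]; omega)
    set s₁ := s.toLeft with hs1
    set s₂ := s.toRight with hs2
    have hsum : ∑ i ∈ s, Sum.elim u w i = ∑ i ∈ s₁, u i + ∑ j ∈ s₂, w j := by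
      conv_lhs => rw [← Finset.toLeft_disjSum_toRight (u := s)]
      rw [Finset.sum_sumElim]
    have hc : s₁.card + s₂.card = m + k := by
      rw [hs1, hs2, Finset.card_toLeft_add_card_toRight, hcard]
    have hc1 : s₁.card ≤ m := by
      simpa using Finset.card_le_univ s₁
    have hk2 : k ≤ s₂.card := by omega
    obtain ⟨t, hts, htc⟩ := Finset.exists_subset_card_eq hk2
    have hsplit2 : ∑ j ∈ s₂ \ t, w j + ∑ j ∈ t, w j = ∑ j ∈ s₂, w j :=
      Finset.sum_sdiff hts
    have hdcard : (s₂ \ t).card = m - s₁.card := by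
      rw [Finset.card_sdiff_of_subset hts]; omega
    have hccard : (s₁ᶜ).card = m - s₁.card := by
      rw [Finset.card_compl]; simp
    have hkey : ∑ j ∈ s₂ \ t, w j ≤ ∑ i ∈ s₁ᶜ, u i := by
      rcases Nat.eq_zero_or_pos (m - s₁.card) with hd | hd
      · rw [Finset.card_eq_zero.1 (by omega : (s₂ \ t).card = 0),
          Finset.card_eq_zero.1 (by omega : (s₁ᶜ).card = 0)]
        simp
      · have hm : 0 < m := by omega
        have : Nonempty (Fin m) := ⟨⟨0, hm⟩⟩
        set c := Finset.univ.inf' Finset.univ_nonempty u with hcdef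
        have hwc : ∀ j, w j ≤ c := by
          intro j
          obtain ⟨i, -, hi⟩ := Finset.exists_mem_eq_inf' _ u
          rw [hcdef, hi]; exact h i j
        have hcu : ∀ i, c ≤ u i := fun i => Finset.inf'_le _ (mem_univ i)
        calc ∑ j ∈ s₂ \ t, w j ≤ (s₂ \ t).card • c :=
              Finset.sum_le_card_nsmul _ _ _ (fun j _ => hwc j)
          _ = (s₁ᶜ).card • c := by rw [hdcard, ← hccard]
          _ ≤ ∑ i ∈ s₁ᶜ, u i := Finset.card_nsmul_le_sum _ _ _ (fun i _ => hcu i)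
    have htE : ∑ j ∈ t, w j ≤ eSum w k := by
      have := leESum w t; rwa [htc] at this
    have hcompl : ∑ i ∈ s₁, u i + ∑ i ∈ s₁ᶜ, u i = ∑ i, u i :=
      Finset.sum_add_sum_compl s₁ u
    rw [hval, hsum]
    linarith
  · obtain ⟨t, htc, htv⟩ := existsESum w k (by simpa using hk)
    have hle := leESum (Sum.elim u w) ((Finset.univ : Finset (Fin m)).disjSum t)
    rw [Finset.card_disjSum, Finset.card_univ, Fintype.card_fin, htc,
      Finset.sum_sumElim] at hle
    rw [htv]
    exact hle

/-- if the sorted versions split into blocks (every entry of the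
second block is at most every entry of the first), `x ≺ y` and `x' ≺ y'`,
then `x'' ≺ y''`. -/
theorem majorization_block_cancel {m n : ℕ} (x' y' : Fin m → ℝ) (x'' y'' : Fin n → ℝ)
    (hx : ∀ (i : Fin m) (j : Fin n), x'' j ≤ x' i)
    (hy : ∀ (i : Fin m) (j : Fin n), y'' j ≤ y' i)
    (hmaj : Maj (Sum.elim x' x'') (Sum.elim y' y''))
    (h' : Maj x' y') : Maj x'' y'' := by 
  classical
  have hx'' : ∀ k : ℕ, 1 ≤ k → k < Fintype.card (Fin n) → eSum x'' k ≤ eSum y'' k := by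
    intro k hk1 hkn
    have hkn' : k < n := by simpa using hkn
    have h1 := hmaj.1 (m + k) (by omega)
      (by simp only [Fintype.card_sum, Fintype.card_fin]; omega)
    rw [eSumSplit x' x'' hx k hkn'.le, eSumSplit y' y'' hy k hkn'.le] at h1
    have h2 := h'.2
    linarith
  have htot : ∑ j, x'' j = ∑ j, y'' j := by
    have h2 := hmaj.2
    simp only [Fintype.sum_sum_type, Sum.elim_inl, Sum.elim_inr] at h2
    have h3 := h'.2
    linarith
  exact ⟨hx'', htot⟩
end

section
/- Let y ∈ R^n have nonnegative entries and distinct sorted values y_1' > y_2' > ... > y_s' with multiplicities k_1, ..., k_s (s ≥ 2), and let x ∈ R^n satisfy x ≺ y but not y ≺ x (i.e., x^↓ ≠ y^↓). Then there exist indices 1 ≤ i < j ≤ s and ε > 0 such that the vector z, obtained from y^↓ by replacing one occurrence of y_i' with y_i' - ε and one occurrence of y_j' with y_j' + ε (keeping it sorted non-increasingly), satisfies x ≺ z ≺ y. -/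
open Finset

section Aux
variable {n : ℕ}

def preF (n m : ℕ) : Finset (Fin n) := Finset.univ.filter (fun i => (i : ℕ) < m)

lemma mem_preF {m : ℕ} {i : Fin n} : i ∈ preF n m ↔ (i : ℕ) < m := by simp [preF]

lemma card_preF {m : ℕ} (h : m ≤ n) : (preF n m).card = m := by
  induction m with
  | zero => simp [preF]
  | succ k ih =>
    have hk : k < n := h
    have hins : preF n (k+1) = insert ⟨k, hk⟩ (preF n k) := by
      ext i
      simp only [mem_preF, Finset.mem_insert, Fin.ext_iff]
      omega
    rw [hins, Finset.card_insert_of_notMem (by simp [mem_preF]), ih (le_of_lt hk)]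

lemma bddAbove_sumSet (v : Fin n → ℝ) (m : ℕ) :
    BddAbove {x | ∃ s : Finset (Fin n), s.card = m ∧ x = ∑ i ∈ s, v i} :=
  BddAbove.mono (by rintro x ⟨s, -, rfl⟩; exact ⟨s, rfl⟩)
    (Set.finite_range (fun s : Finset (Fin n) => ∑ i ∈ s, v i)).bddAbove

lemma le_eSum (v : Fin n → ℝ) {m : ℕ} (s : Finset (Fin n)) (hs : s.card = m) :
    ∑ i ∈ s, v i ≤ eSum v m :=
  le_csSup (bddAbove_sumSet v m) ⟨s, hs, rfl⟩

lemma eSum_le (v : Fin n → ℝ) {m : ℕ} (hm : m ≤ n) {c : ℝ}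
    (h : ∀ s : Finset (Fin n), s.card = m → ∑ i ∈ s, v i ≤ c) : eSum v m ≤ c := by
  refine csSup_le ⟨∑ i ∈ preF n m, v i, ⟨preF n m, card_preF hm, rfl⟩⟩ ?_
  rintro x ⟨s, hs, rfl⟩; exact h s hs

lemma strictMono_nat_le : ∀ (k : ℕ) {m : ℕ} (f : Fin m → Fin n), StrictMono f →
    ∀ i : Fin m, (i : ℕ) = k → k ≤ (f i : ℕ) := by
  intro k
  induction k with
  | zero => intros; omega
  | succ p ih =>
    intro m f hf i hik
    have hp : p < m := by omega
    have h1 : f ⟨p, hp⟩ < f i := hf (by rw [Fin.lt_def]; exact (show p < (i:ℕ) by omega))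
    have h2 := ih f hf ⟨p, hp⟩ rfl
    rw [Fin.lt_def] at h1
    omega

lemma sum_le_sum_preF {w : Fin n → ℝ} (hw : Antitone w) (s : Finset (Fin n)) :
    ∑ i ∈ s, w i ≤ ∑ i ∈ preF n s.card, w i := by
  set m := s.card with hm
  have hmn : m ≤ n := by rw [hm]; simpa using Finset.card_le_univ s
  have hsc : s.card = m := hm.symm
  set e := s.orderIsoOfFin hsc with he
  have hsm : StrictMono (fun j : Fin m => ((e j : Fin n))) :=
    fun a b h => Subtype.coe_lt_coe.mpr (e.strictMono h)
  have h1 : ∑ i ∈ s, w i = ∑ j : Fin m, w (e j) := by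
    rw [← Finset.sum_coe_sort s w]
    exact (Equiv.sum_comp e.toEquiv (fun i : s => w i)).symm
  have h2 : ∑ j : Fin m, w (e j) ≤ ∑ j : Fin m, w (⟨j, lt_of_lt_of_le j.2 hmn⟩ : Fin n) := by
    apply Finset.sum_le_sum
    intro j _
    apply hw
    rw [Fin.le_def]
    exact strictMono_nat_le (j : ℕ) _ hsm j rfl
  have h3 : ∑ j : Fin m, w (⟨j, lt_of_lt_of_le j.2 hmn⟩ : Fin n) = ∑ i ∈ preF n m, w i := by
    rcases Nat.eq_zero_or_pos m with hm0 | hm0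
    · have h4 : preF n m = ∅ := by
        ext i; simp only [mem_preF, Finset.notMem_empty, iff_false]; omega
      rw [h4, Finset.sum_empty]
      exact Finset.sum_eq_zero (fun j _ => absurd j.2 (by omega))
    apply Finset.sum_nbij' (fun j : Fin m => (⟨j, lt_of_lt_of_le j.2 hmn⟩ : Fin n))
      (fun i : Fin n => (⟨(i : ℕ) % m, Nat.mod_lt _ hm0⟩ : Fin m))
    · intro a _; simp [mem_preF]
    · intro a _; simp
    · intro a _
      simp [Fin.ext_iff, Nat.mod_eq_of_lt a.2]
    · intro a ha
      simp only [mem_preF] at ha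
      simp [Fin.ext_iff, Nat.mod_eq_of_lt ha]
    · intro a _; rfl
  rw [h1]
  exact h2.trans_eq h3

lemma exists_antitone_perm (v : Fin n → ℝ) :
    ∃ e : Equiv.Perm (Fin n), Antitone (fun i => v (e i)) := by
  refine ⟨(Fin.revPerm).trans (Tuple.sort v), ?_⟩
  intro i j hij
  have := Tuple.monotone_sort v ((Fin.rev_le_rev).mpr hij)
  simpa using this

lemma eSum_eq (v : Fin n → ℝ) (e : Equiv.Perm (Fin n)) (he : Antitone (fun i => v (e i)))
    {m : ℕ} (hm : m ≤ n) : eSum v m = ∑ i ∈ preF n m, v (e i) := by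
  apply le_antisymm
  · apply eSum_le v hm
    intro s hs
    have hcard : (s.image e.symm).card = m := by
      rw [Finset.card_image_of_injective _ e.symm.injective, hs]
    have h1 : ∑ j ∈ s.image e.symm, v (e j) = ∑ i ∈ s, v i := by
      rw [Finset.sum_image (fun a _ b _ h => e.symm.injective h)]
      simp
    calc ∑ i ∈ s, v i = ∑ j ∈ s.image e.symm, v (e j) := h1.symm
      _ ≤ ∑ j ∈ preF n (s.image e.symm).card, v (e j) := sum_le_sum_preF he _
      _ = ∑ i ∈ preF n m, v (e i) := by rw [hcard]
  · have hcard : ((preF n m).image e).card = m := by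
      rw [Finset.card_image_of_injective _ e.injective, card_preF hm]
    have h1 : ∑ i ∈ (preF n m).image e, v i = ∑ j ∈ preF n m, v (e j) :=
      Finset.sum_image (fun a _ b _ h => e.injective h)
    rw [← h1]
    exact le_eSum v _ hcard

lemma eSum_total (v : Fin n → ℝ) : eSum v n = ∑ i, v i := by
  obtain ⟨e, he⟩ := exists_antitone_perm v
  rw [eSum_eq v e he le_rfl]
  have huniv : preF n n = Finset.univ := by ext i; simp [mem_preF, i.2]
  rw [huniv]
  exact Equiv.sum_comp e v

lemma sum_update2 {a b : Fin n} (hab : a ≠ b) (y : Fin n → ℝ) (ε : ℝ) (s : Finset (Fin n)) :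
    ∑ i ∈ s, Function.update (Function.update y a (y a - ε)) b (y b + ε) i
      = ∑ i ∈ s, y i + (if b ∈ s then ε else 0) - (if a ∈ s then ε else 0) := by
  have hz : ∀ i, Function.update (Function.update y a (y a - ε)) b (y b + ε) i
      = y i + (if i = b then ε else 0) - (if i = a then ε else 0) := by
    intro i
    rcases eq_or_ne i b with rfl | hib
    · rw [Function.update_self, if_pos rfl, if_neg (Ne.symm hab)]
      ring
    · rw [Function.update_of_ne hib, if_neg hib]
      rcases eq_or_ne i a with rfl | hia
      · rw [Function.update_self, if_pos rfl]; ring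
      · rw [Function.update_of_ne hia, if_neg hia]; ring
  rw [Finset.sum_congr rfl (fun i _ => hz i)]
  rw [Finset.sum_sub_distrib, Finset.sum_add_distrib, Finset.sum_ite_eq' s, Finset.sum_ite_eq' s]

end Aux

lemma eSum_zero_s16 {n : ℕ} (v : Fin n → ℝ) : eSum v 0 = 0 := by
  obtain ⟨e, he⟩ := exists_antitone_perm v
  rw [eSum_eq v e he (Nat.zero_le n)]
  have h : preF n 0 = ∅ := by ext i; simp [mem_preF]
  simp [h]

/-- the Robin Hood / transfer lemma for majorization: if `x ≺ y`
but not `y ≺ x`, there is an `ε`-transfer from a larger entry of `y` to a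
smaller one yielding `z` with `x ≺ z ≺ y`. -/
theorem exists_transfer_between {n : ℕ} (y x : Fin n → ℝ)
    (hy : ∀ i, 0 ≤ y i) (hs : ∃ a b : Fin n, y a ≠ y b)
    (hxy : Maj x y) (hne : ¬ Maj y x) :
    ∃ (a b : Fin n) (ε : ℝ), 0 < ε ∧ y b < y a ∧
      Maj x (Function.update (Function.update y a (y a - ε)) b (y b + ε)) ∧
      Maj (Function.update (Function.update y a (y a - ε)) b (y b + ε)) y := by
  classical
  obtain ⟨ey, hey⟩ := exists_antitone_perm y
  obtain ⟨ex, hex⟩ := exists_antitone_perm x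
  have hcard : Fintype.card (Fin n) = n := Fintype.card_fin n
  have htot : ∑ i, x i = ∑ j, y j := hxy.2
  have hEn : eSum y n = eSum x n := by rw [eSum_total, eSum_total, htot]
  have hex0 : ∃ m0, 1 ≤ m0 ∧ m0 < n ∧ eSum x m0 < eSum y m0 := by
    by_contra hcon
    push_neg at hcon
    exact hne ⟨fun m h1 h2 => hcon m h1 (by rwa [hcard] at h2), htot.symm⟩
  obtain ⟨m0, hm01, hm0n, hm0lt⟩ := hex0
  set P : ℕ → Prop := fun k => eSum y k ≤ eSum x k with hPdef
  have hP0 : P 0 := by rw [hPdef]; simp [eSum_zero_s16]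
  set l := Nat.findGreatest P (m0 - 1) with hldef
  have hPl : P l := Nat.findGreatest_spec (Nat.zero_le _) hP0
  have hlle : l ≤ m0 - 1 := Nat.findGreatest_le _
  have hlm0 : l < m0 := by omega
  have hlmax : ∀ k, l < k → k ≤ m0 - 1 → ¬ P k := fun k h1 h2 =>
    Nat.findGreatest_is_greatest h1 h2
  have hPn : P n := le_of_eq hEn
  have hrex : ∃ k, m0 < k ∧ P k := ⟨n, hm0n, hPn⟩
  set r := Nat.find hrex with hrdef
  obtain ⟨hm0r, hPr⟩ := Nat.find_spec hrex
  have hrn : r ≤ n := Nat.find_min' hrex ⟨hm0n, hPn⟩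
  have hrmin : ∀ k, m0 < k → k < r → ¬ P k := fun k h1 h2 hp =>
    (Nat.find_min hrex h2) ⟨h1, hp⟩
  have dpos : ∀ m, l < m → m < r → eSum x m < eSum y m := by
    intro m h1 h2
    have hnp : ¬ P m := by
      rcases lt_trichotomy m m0 with h | h | h
      · exact hlmax m h1 (by omega)
      · exact h ▸ (fun hp => absurd hm0lt (not_lt.mpr hp))
      · exact hrmin m h h2
    exact not_le.mp hnp
  have hln : l < n := by omega
  have hr1n : r - 1 < n := by omega
  have hEl : eSum y l = eSum x l := by
    rcases Nat.eq_zero_or_pos l with h0 | h0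
    · rw [h0, eSum_zero_s16, eSum_zero_s16]
    · exact le_antisymm hPl (hxy.1 l h0 (by rw [hcard]; omega))
  have hEr : eSum y r = eSum x r := by
    rcases eq_or_lt_of_le hrn with h0 | h0
    · rw [h0]; exact hEn
    · exact le_antisymm hPr (hxy.1 r (by omega) (by rw [hcard]; omega))
  have hsplit : ∀ (v : Fin n → ℝ) (e : Equiv.Perm (Fin n)), Antitone (fun i => v (e i)) →
      ∀ p q : ℕ, p ≤ q → q ≤ n →
      eSum v q - eSum v p = ∑ i ∈ preF n q \ preF n p, v (e i) := by
    intro v e he p q hpq hqn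
    have hsub : preF n p ⊆ preF n q := fun i hi => by
      rw [mem_preF] at *; omega
    rw [eSum_eq v e he hqn, eSum_eq v e he (le_trans hpq hqn)]
    have := Finset.sum_sdiff (f := fun i => v (e i)) hsub
    linarith
  have hcard_sdiff : ∀ p q : ℕ, p ≤ q → q ≤ n → (preF n q \ preF n p).card = q - p := by
    intro p q hpq hqn
    have hsub : preF n p ⊆ preF n q := fun i hi => by
      rw [mem_preF] at *; omega
    rw [Finset.card_sdiff_of_subset hsub, card_preF hqn, card_preF (le_trans hpq hqn)]
  have hmem_sdiff : ∀ p q : ℕ, ∀ i : Fin n,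
      i ∈ preF n q \ preF n p ↔ p ≤ (i:ℕ) ∧ (i:ℕ) < q := by
    intro p q i
    simp only [Finset.mem_sdiff, mem_preF]
    omega
  have hdrop : y (ey ⟨r-1, hr1n⟩) < y (ey ⟨l, hln⟩) := by
    have hle : y (ey ⟨r-1, hr1n⟩) ≤ y (ey ⟨l, hln⟩) :=
      hey (by rw [Fin.le_def]; exact (show l ≤ r - 1 by omega))
    rcases eq_or_lt_of_le hle with heq | hlt
    · exfalso
      set c := y (ey ⟨l, hln⟩) with hc
      have hconst : ∀ i : Fin n, l ≤ (i:ℕ) → (i:ℕ) < r → y (ey i) = c := by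
        intro i h1 h2
        have hA : y (ey i) ≤ c := hey (by rw [Fin.le_def]; exact h1)
        have hB : c ≤ y (ey i) := by
          calc c = y (ey ⟨r-1, hr1n⟩) := heq.symm
            _ ≤ y (ey i) := hey (by rw [Fin.le_def]; exact (show (i:ℕ) ≤ r - 1 by omega))
        linarith
      have hy1 : eSum y m0 - eSum y l = ((m0 - l : ℕ) : ℝ) * c := by
        rw [hsplit y ey hey l m0 (by omega) (by omega),
          Finset.sum_congr rfl (fun i hi => hconst i ((hmem_sdiff l m0 i).mp hi).1
            (by have := ((hmem_sdiff l m0 i).mp hi).2; omega)),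
          Finset.sum_const, hcard_sdiff l m0 (by omega) (by omega), nsmul_eq_mul]
      have hy2 : eSum y r - eSum y m0 = ((r - m0 : ℕ) : ℝ) * c := by
        rw [hsplit y ey hey m0 r (by omega) hrn,
          Finset.sum_congr rfl (fun i hi => hconst i
            (by have := ((hmem_sdiff m0 r i).mp hi).1; omega)
            ((hmem_sdiff m0 r i).mp hi).2),
          Finset.sum_const, hcard_sdiff m0 r (by omega) hrn, nsmul_eq_mul]
      have hm01n : m0 - 1 < n := by omega
      set d := x (ex ⟨m0 - 1, hm01n⟩) with hd
      have hx1 : ((m0 - l : ℕ) : ℝ) * d ≤ eSum x m0 - eSum x l := by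
        rw [hsplit x ex hex l m0 (by omega) (by omega)]
        have hbd : ∀ i ∈ preF n m0 \ preF n l, d ≤ x (ex i) := by
          intro i hi
          have hm := (hmem_sdiff l m0 i).mp hi
          exact hex (by rw [Fin.le_def]; exact (show (i:ℕ) ≤ m0 - 1 by omega))
        have := Finset.card_nsmul_le_sum (preF n m0 \ preF n l) (fun i => x (ex i)) d hbd
        rwa [hcard_sdiff l m0 (by omega) (by omega), nsmul_eq_mul] at this
      have hx2 : eSum x r - eSum x m0 ≤ ((r - m0 : ℕ) : ℝ) * d := by
        rw [hsplit x ex hex m0 r (by omega) hrn]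
        have hbd : ∀ i ∈ preF n r \ preF n m0, x (ex i) ≤ d := by
          intro i hi
          have hm := (hmem_sdiff m0 r i).mp hi
          exact hex (by rw [Fin.le_def]; exact (show m0 - 1 ≤ (i:ℕ) by omega))
        have := Finset.sum_le_card_nsmul (preF n r \ preF n m0) (fun i => x (ex i)) d hbd
        rwa [hcard_sdiff m0 r (by omega) hrn, nsmul_eq_mul] at this
      have hp : (0:ℝ) < ((m0 - l : ℕ) : ℝ) := by
        exact_mod_cast Nat.cast_pos.mpr (show 0 < m0 - l by omega)
      have hq : (0:ℝ) < ((r - m0 : ℕ) : ℝ) := by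
        exact_mod_cast Nat.cast_pos.mpr (show 0 < r - m0 by omega)
      nlinarith [hm0lt, hEl, hEr, hy1, hy2, hx1, hx2, hp, hq, mul_pos hp hq]
    · exact hlt
  set a := ey ⟨l, hln⟩ with ha
  set b := ey ⟨r-1, hr1n⟩ with hb
  have hba : y b < y a := hdrop
  have hab : a ≠ b := fun h => by rw [h] at hba; exact lt_irrefl _ hba
  have hIoo : m0 ∈ Finset.Ioo l r := Finset.mem_Ioo.mpr ⟨hlm0, hm0r⟩
  set ε := min (y a - y b) ((Finset.Ioo l r).inf' ⟨m0, hIoo⟩ (fun m => eSum y m - eSum x m))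
    with hεdef
  have hεpos : 0 < ε := by
    apply lt_min (by linarith)
    apply (Finset.lt_inf'_iff _).mpr
    intro m hm
    rw [Finset.mem_Ioo] at hm
    have := dpos m hm.1 hm.2
    linarith
  have hε1 : ε ≤ y a - y b := min_le_left _ _
  have hε2 : ∀ m, l < m → m < r → ε ≤ eSum y m - eSum x m := fun m h1 h2 =>
    le_trans (min_le_right _ _) (Finset.inf'_le _ (Finset.mem_Ioo.mpr ⟨h1, h2⟩))
  set z := Function.update (Function.update y a (y a - ε)) b (y b + ε) with hzdef
  have hzsum : ∀ s : Finset (Fin n),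
      ∑ i ∈ s, z i = ∑ i ∈ s, y i + (if b ∈ s then ε else 0) - (if a ∈ s then ε else 0) :=
    fun s => sum_update2 hab y ε s
  have hztot : ∑ i, z i = ∑ i, y i := by
    rw [hzsum Finset.univ]
    simp
  have hzy : Maj z y := by
    constructor
    · intro m h1 h2
      rw [hcard] at h2
      apply eSum_le z (le_of_lt h2)
      intro s hsc
      rw [hzsum s]
      by_cases hbs : b ∈ s
      · by_cases has : a ∈ s
        · simp only [if_pos hbs, if_pos has]
          have := le_eSum y s hsc
          linarith
        · have hbe : a ∉ s.erase b := fun h => has (Finset.mem_of_mem_erase h)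
          have hcard' : (insert a (s.erase b)).card = m := by
            rw [Finset.card_insert_of_notMem hbe, Finset.card_erase_of_mem hbs, hsc]
            have : 1 ≤ m := h1
            omega
          have hsum' : ∑ i ∈ insert a (s.erase b), y i = y a + (∑ i ∈ s, y i - y b) := by
            rw [Finset.sum_insert hbe]
            have := Finset.sum_erase_add s y hbs
            linarith
          have hle := le_eSum y _ hcard'
          rw [hsum'] at hle
          simp only [if_pos hbs, if_neg has]
          linarith
      · simp only [if_neg hbs]
        have := le_eSum y s hsc
        by_cases has : a ∈ s <;> simp only [if_pos, if_neg, has, if_true, if_false] <;> linarith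
    · exact hztot
  have hxz : Maj x z := by
    constructor
    · intro m h1 h2
      rw [hcard] at h2
      have hmn : m ≤ n := le_of_lt h2
      set S := (preF n m).image ey with hSdef
      have hSc : S.card = m := by
        rw [hSdef, Finset.card_image_of_injective _ ey.injective, card_preF hmn]
      have hSe : eSum y m = ∑ i ∈ S, y i := by
        rw [hSdef, eSum_eq y ey hey hmn]
        exact (Finset.sum_image (fun p _ q _ h => ey.injective h)).symm
      have hamem : a ∈ S ↔ l < m := by
        constructor
        · intro h
          obtain ⟨j, hj, hje⟩ := Finset.mem_image.mp h
          have hjl : j = ⟨l, hln⟩ := ey.injective hje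
          rw [hjl, mem_preF] at hj
          exact hj
        · intro h
          exact Finset.mem_image.mpr ⟨⟨l, hln⟩, by rw [mem_preF]; exact h, rfl⟩
      have hbmem : b ∈ S ↔ r - 1 < m := by
        constructor
        · intro h
          obtain ⟨j, hj, hje⟩ := Finset.mem_image.mp h
          have hjl : j = ⟨r-1, hr1n⟩ := ey.injective hje
          rw [hjl, mem_preF] at hj
          exact hj
        · intro h
          exact Finset.mem_image.mpr ⟨⟨r-1, hr1n⟩, by rw [mem_preF]; exact h, rfl⟩
      have hxym : eSum x m ≤ eSum y m := hxy.1 m h1 (by rw [hcard]; exact h2)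
      have h4 := hzsum S
      have h5 := le_eSum z S hSc
      rw [h4] at h5
      rcases le_or_gt m l with hml | hlm
      · have hnas : a ∉ S := fun h => by have := hamem.mp h; omega
        rw [if_neg hnas] at h5
        by_cases hbs : b ∈ S
        · rw [if_pos hbs] at h5; linarith [hSe]
        · rw [if_neg hbs] at h5; linarith [hSe]
      rcases le_or_gt r m with hrm | hmr
      · have has : a ∈ S := hamem.mpr (by omega)
        have hbs : b ∈ S := hbmem.mpr (by omega)
        rw [if_pos has, if_pos hbs] at h5
        linarith [hSe]
      · have h6 := hε2 m hlm hmr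
        have h7 : ∑ i ∈ S, y i - ε ≤ eSum z m := by
          by_cases hbs : b ∈ S <;> by_cases has : a ∈ S <;>
            simp only [if_pos, if_neg, hbs, has, if_true, if_false] at h5 <;> linarith
        rw [← hSe] at h7
        linarith
    · exact hxy.2.trans hztot.symm
  exact ⟨a, b, ε, hεpos, hba, hxz, hzy⟩
end
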